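/- arXiv:2007.09787 — 3 statements merged into one kernel-verified Lean document; each statement's English description precedes it below -/
import Mathlib

section
/- Let q be a prime power, n ≥ 3, m₁, m₂ positive integers and f ∈ Υ_{qⁿ}(m₁,m₂). Let ℓ be a divisor of qⁿ−1 and let {p₁,…,p_r} be the set of all primes dividing qⁿ−1 but not dividing ℓ. Let g ∈ F_q[x] be a divisor of xⁿ−1 and let {P₁,…,P_s} ⊂ F_q[x] be the set of all monic irreducible polynomials dividing xⁿ−1 but not dividing g. Then N_f(qⁿ−1, qⁿ−1, xⁿ−1) ≥ Σ_{i=1}^{r} N_f(p_i ℓ, ℓ, g) + Σ_{i=1}^{r} N_f(ℓ, p_i ℓ, g) + Σ_{i=1}^{s} N_f(ℓ, ℓ, P_i g) − (2r + s − 1) · N_f(ℓ, ℓ, g). -/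
open Polynomial

noncomputable section

/-- An element of a finite field is *primitive* if it generates the multiplicative group. -/
def IsPrimitiveElem {L : Type} [Field L] [Fintype L] (α : L) : Prop :=
  orderOf α = Fintype.card L - 1

/-- `β` is a *normal element* of `L` over `K`, where `n = [L : K]`:
the conjugates `β, β^q, …, β^(q^(n-1))` form a `K`-basis of `L`. -/
def IsNormalElem (K : Type) {L : Type} [Field K] [Fintype K] [Field L] [Algebra K L]
    (n : ℕ) (β : L) : Prop :=
  LinearIndependent K (fun i : Fin n => β ^ Fintype.card K ^ (i : ℕ)) ∧
    Submodule.span K (Set.range fun i : Fin n => β ^ Fintype.card K ^ (i : ℕ)) = ⊤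

/-- The set `Υ_Q(m₁, m₂)` of rational functions over the field `F` with `Q` elements. -/
def Upsilon (F : Type) [Field F] [Fintype F] (m₁ m₂ : ℕ) : Set (RatFunc F) :=
  {f | ∃ f₁ f₂ : F[X], f₂ ≠ 0 ∧
      f = algebraMap F[X] (RatFunc F) f₁ / algebraMap F[X] (RatFunc F) f₂ ∧
      f₁.natDegree ≤ m₁ ∧ f₂.natDegree ≤ m₂ ∧ IsCoprime f₁ f₂ ∧
      ∃ (k : ℕ) (g : F[X]), 0 < k ∧ g.Monic ∧ Irreducible g ∧ g ≠ X ∧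
        Nat.gcd k (Fintype.card F - 1) = 1 ∧
        g ^ k ∣ f₁ * f₂ ∧ ¬ g ^ (k + 1) ∣ f₁ * f₂}

/-- Evaluation of a rational function at a point of the same field (`0` if undefined). -/
def ratEval {F : Type} [Field F] (f : RatFunc F) (α : F) : F :=
  f.eval (RingHom.id F) α

/-- `α` is `s`-free. -/
def IsFree {F : Type} [Field F] (s : ℕ) (α : F) : Prop :=
  α ≠ 0 ∧ ∀ d : ℕ, d ∣ s → d ≠ 1 → ¬ ∃ β : F, β ^ d = α

/-- The `F_q[x]`-module action `h ∘ β = ∑ hᵢ β^(qⁱ)` on `L`. -/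
def polyAct {K L : Type} [Field K] [Fintype K] [Field L] [Algebra K L]
    (h : K[X]) (β : L) : L :=
  h.sum fun i a => algebraMap K L a * β ^ Fintype.card K ^ i

/-- `α` is `g`-free with respect to the `F_q[x]`-module structure of `L`. -/
def IsPolyFree (K : Type) {L : Type} [Field K] [Fintype K] [Field L] [Algebra K L]
    (g : K[X]) (α : L) : Prop :=
  ∀ h : K[X], h.Monic → h ∣ g → (∃ lam : L, α = polyAct h lam) → h = 1

/-- `N_f(e₁, e₂, g)`: the number of `α ∈ L` such that `α` is `e₁`-free,
`f(α)` is `e₂`-free and `α` is `g`-free. -/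
def NElems (K : Type) {L : Type} [Field K] [Fintype K] [Field L] [Fintype L] [Algebra K L]
    (f : RatFunc L) (e₁ e₂ : ℕ) (g : K[X]) : ℕ :=
  Nat.card {α : L | IsFree e₁ α ∧ IsFree e₂ (ratEval f α) ∧ IsPolyFree K g α}

/-- `W(ℓ)`: the number of squarefree divisors of `ℓ`. -/
def Wnat (ℓ : ℕ) : ℕ := (ℓ.divisors.filter Squarefree).card

/-- `W_q(g)`: the number of monic squarefree divisors of `g` in `F_q[x]`. -/
def Wpoly {K : Type} [Field K] (g : K[X]) : ℕ :=
  Nat.card {h : K[X] // h.Monic ∧ Squarefree h ∧ h ∣ g}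

/-- `Φ(g) = |(F_q[x]/(g))ˣ|`. -/
def PhiPoly {K : Type} [Field K] (g : K[X]) : ℕ :=
  Nat.card ((K[X] ⧸ Ideal.span ({g} : Set K[X]))ˣ)

/-- `(q, n) ∈ B(m₁, m₂)`: for every `f ∈ Υ_{qⁿ}(m₁, m₂)` there is a primitive element
`α` of `F_{qⁿ}`, normal over `F_q`, with `f(α)` also primitive. -/
def memB (m₁ m₂ q n : ℕ) : Prop :=
  ∀ (K L : Type) [Field K] [Field L] [Fintype K] [Fintype L] [Algebra K L],
    Fintype.card K = q → Fintype.card L = q ^ n →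
    ∀ f ∈ Upsilon L m₁ m₂,
      ∃ α : L, IsPrimitiveElem α ∧ IsNormalElem K n α ∧ IsPrimitiveElem (ratEval f α)

/-- `𝔑(q, n)`: the number of primitive elements of `F_{qⁿ}` that are normal over `F_q`. -/
def NNum (K L : Type) [Field K] [Fintype K] [Field L] [Fintype L] [Algebra K L] (n : ℕ) : ℕ :=
  Nat.card {α : L | IsPrimitiveElem α ∧ IsNormalElem K n α}

end


section Aux

variable {K L : Type} [Field K] [Fintype K] [Field L] [Algebra K L]

lemma add_pow_cardK (x y : L) :
    (x + y) ^ Fintype.card K = x ^ Fintype.card K + y ^ Fintype.card K := by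
  set p := ringChar K with hp
  haveI : CharP K p := ringChar.charP K
  obtain ⟨k, hpp, hcard⟩ := FiniteField.card K p
  haveI : CharP L p := charP_of_injective_algebraMap (algebraMap K L).injective p
  haveI : Fact p.Prime := ⟨hpp⟩
  rw [hcard]
  exact add_pow_char_pow (R := L) ..

noncomputable def frobEnd (K : Type) {L : Type} [Field K] [Fintype K] [Field L] [Algebra K L] :
    Module.End K L where
  toFun x := x ^ Fintype.card K
  map_add' x y := add_pow_cardK x y
  map_smul' a x := by
    simp only [Algebra.smul_def, mul_pow, RingHom.id_apply]
    rw [← map_pow, FiniteField.pow_card]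

lemma frobEnd_pow (i : ℕ) (β : L) : ((frobEnd K) ^ i) β = β ^ Fintype.card K ^ i := by
  induction i with
  | zero => simp
  | succ i ih =>
    rw [pow_succ', Module.End.mul_apply, ih]
    show (β ^ Fintype.card K ^ i) ^ Fintype.card K = _
    rw [← pow_mul, ← pow_succ]

lemma polyAct_eq_aeval (h : K[X]) (β : L) : polyAct h β = (Polynomial.aeval (frobEnd K) h) β := by
  rw [Polynomial.aeval_def, Polynomial.eval₂_eq_sum, polyAct, Polynomial.sum, Polynomial.sum,
    LinearMap.coe_sum, Finset.sum_apply]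
  refine Finset.sum_congr rfl fun i _ => ?_
  rw [Module.End.mul_apply, frobEnd_pow, Module.algebraMap_end_apply, Algebra.smul_def]

lemma polyAct_mul (a b : K[X]) (β : L) : polyAct (a * b) β = polyAct a (polyAct b β) := by
  rw [polyAct_eq_aeval, polyAct_eq_aeval, polyAct_eq_aeval, map_mul, Module.End.mul_apply]

lemma isFree_mono {F : Type} [Field F] {s t : ℕ} (h : s ∣ t) {α : F} (ht : IsFree t α) :
    IsFree s α :=
  ⟨ht.1, fun d hd hd1 => ht.2 d (hd.trans h) hd1⟩

lemma isFree_of_primes {F : Type} [Field F] {s : ℕ} {α : F} (h0 : α ≠ 0)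
    (h : ∀ p : ℕ, p.Prime → p ∣ s → ¬ ∃ β : F, β ^ p = α) : IsFree s α := by
  refine ⟨h0, fun d hd hd1 ⟨β, hβ⟩ => ?_⟩
  rcases Nat.eq_zero_or_pos d with rfl | hdpos
  · have hα : α = 1 := by simpa using hβ.symm
    exact h 2 Nat.prime_two ((Nat.eq_zero_of_zero_dvd hd) ▸ dvd_zero 2) ⟨1, by simp [hα]⟩
  · obtain ⟨p, hp, hpd⟩ := Nat.exists_prime_and_dvd hd1
    refine h p hp (hpd.trans hd) ⟨β ^ (d / p), ?_⟩
    rw [← pow_mul, Nat.div_mul_cancel hpd, hβ]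

lemma isPolyFree_mono {g g' : K[X]} (h : g' ∣ g) {α : L} (hg : IsPolyFree K g α) :
    IsPolyFree K g' α :=
  fun h' hm hdvd hex => hg h' hm (hdvd.trans h) hex

lemma isPolyFree_of_irreds {G : K[X]} {α : L}
    (h : ∀ P : K[X], P.Monic → Irreducible P → P ∣ G → ¬ ∃ lam : L, α = polyAct P lam) :
    IsPolyFree K G α := by
  intro h' hm hdvd ⟨lam, hlam⟩
  by_contra h1
  have hnu : ¬ IsUnit h' := fun hu => h1 (hm.eq_one_of_isUnit hu)
  obtain ⟨P, hPirr, hPdvd⟩ := WfDvdMonoid.exists_irreducible_factor hnu hm.ne_zero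
  set Pn := P * Polynomial.C P.leadingCoeff⁻¹ with hPn
  have hP0 : P ≠ 0 := hPirr.ne_zero
  have hPnm : Pn.Monic := Polynomial.monic_mul_leadingCoeff_inv hP0
  have hassoc : Associated P Pn :=
    associated_mul_unit_right P _ (Polynomial.isUnit_C.mpr
      (isUnit_iff_ne_zero.mpr (inv_ne_zero (Polynomial.leadingCoeff_ne_zero.mpr hP0))))
  have hPni : Irreducible Pn := hassoc.irreducible hPirr
  have hPnd : Pn ∣ h' := hassoc.dvd_iff_dvd_left.mp hPdvd
  obtain ⟨c, hc⟩ := id hPnd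
  exact h Pn hPnm hPni (dvd_trans hPnd hdvd) ⟨polyAct c lam, by rw [hlam, hc, polyAct_mul]⟩

lemma NElems_eq_card [Fintype L] (f : RatFunc L) (e₁ e₂ : ℕ) (G : K[X])
    [DecidablePred fun α : L => IsFree e₁ α ∧ IsFree e₂ (ratEval f α) ∧ IsPolyFree K G α] :
    NElems K f e₁ e₂ G = (Finset.univ.filter
      (fun α : L => IsFree e₁ α ∧ IsFree e₂ (ratEval f α) ∧ IsPolyFree K G α)).card := by
  classical
  rw [NElems, Nat.card_coe_set_eq, Set.ncard_eq_toFinset_card', Set.toFinset_setOf]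

end Aux

theorem stmt2 (q n m₁ m₂ : ℕ) (hq : IsPrimePow q) (hn : 3 ≤ n)
    (hm₁ : 0 < m₁) (hm₂ : 0 < m₂)
    (K L : Type) [Field K] [Field L] [Fintype K] [Fintype L] [Algebra K L]
    (hK : Fintype.card K = q) (hL : Fintype.card L = q ^ n)
    (f : RatFunc L) (hf : f ∈ Upsilon L m₁ m₂)
    (ℓ : ℕ) (hℓ : ℓ ∣ q ^ n - 1)
    (R : Finset ℕ) (hR : ∀ p : ℕ, p ∈ R ↔ p.Prime ∧ p ∣ q ^ n - 1 ∧ ¬ p ∣ ℓ)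
    (g : Polynomial K) (hgdvd : g ∣ X ^ n - 1)
    (S : Finset (Polynomial K))
    (hS : ∀ P : Polynomial K, P ∈ S ↔ P.Monic ∧ Irreducible P ∧ P ∣ X ^ n - 1 ∧ ¬ P ∣ g) :
    (NElems K f (q ^ n - 1) (q ^ n - 1) ((X : Polynomial K) ^ n - 1) : ℝ) ≥
      (∑ p ∈ R, (NElems K f (p * ℓ) ℓ g : ℝ)) +
      (∑ p ∈ R, (NElems K f ℓ (p * ℓ) g : ℝ)) +
      (∑ P ∈ S, (NElems K f ℓ ℓ (P * g) : ℝ)) -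
      (2 * (R.card : ℝ) + S.card - 1) * NElems K f ℓ ℓ g := by
  classical
  -- abbreviations for the predicates/finsets
  set T0 : Finset L := Finset.univ.filter
    (fun α : L => IsFree ℓ α ∧ IsFree ℓ (ratEval f α) ∧ IsPolyFree K g α) with hT0
  set TA : ℕ → Finset L := fun p => Finset.univ.filter
    (fun α : L => IsFree (p * ℓ) α ∧ IsFree ℓ (ratEval f α) ∧ IsPolyFree K g α) with hTA
  set TB : ℕ → Finset L := fun p => Finset.univ.filter
    (fun α : L => IsFree ℓ α ∧ IsFree (p * ℓ) (ratEval f α) ∧ IsPolyFree K g α) with hTB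
  set TC : Polynomial K → Finset L := fun P => Finset.univ.filter
    (fun α : L => IsFree ℓ α ∧ IsFree ℓ (ratEval f α) ∧ IsPolyFree K (P * g) α) with hTC
  set T : Finset L := Finset.univ.filter
    (fun α : L => IsFree (q ^ n - 1) α ∧ IsFree (q ^ n - 1) (ratEval f α) ∧
      IsPolyFree K ((X : Polynomial K) ^ n - 1) α) with hT
  -- divisibility facts
  have hpl : ∀ p ∈ R, p * ℓ ∣ q ^ n - 1 := by
    intro p hp
    obtain ⟨hpp, hpd, hpnd⟩ := (hR p).mp hp
    exact Nat.Coprime.mul_dvd_of_dvd_of_dvd (hpp.coprime_iff_not_dvd.mpr hpnd) hpd hℓ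
  have hPg : ∀ P ∈ S, P * g ∣ (X : Polynomial K) ^ n - 1 := by
    intro P hP
    obtain ⟨hPm, hPirr, hPd, hPnd⟩ := (hS P).mp hP
    exact (hPirr.coprime_iff_not_dvd.mpr hPnd).mul_dvd hPd hgdvd
  -- subset facts
  have hA0 : ∀ p, TA p ⊆ T0 := by
    intro p α hα
    simp only [hTA, hT0, Finset.mem_filter, Finset.mem_univ, true_and] at hα ⊢
    exact ⟨isFree_mono (dvd_mul_left ℓ p) hα.1, hα.2.1, hα.2.2⟩
  have hB0 : ∀ p, TB p ⊆ T0 := by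
    intro p α hα
    simp only [hTB, hT0, Finset.mem_filter, Finset.mem_univ, true_and] at hα ⊢
    exact ⟨hα.1, isFree_mono (dvd_mul_left ℓ p) hα.2.1, hα.2.2⟩
  have hC0 : ∀ P, TC P ⊆ T0 := by
    intro P α hα
    simp only [hTC, hT0, Finset.mem_filter, Finset.mem_univ, true_and] at hα ⊢
    exact ⟨hα.1, hα.2.1, isPolyFree_mono (dvd_mul_left g P) hα.2.2⟩
  -- characterization of T
  have hTiff : ∀ α : L, α ∈ T ↔ α ∈ T0 ∧ (∀ p ∈ R, α ∈ TA p) ∧ (∀ p ∈ R, α ∈ TB p) ∧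
      (∀ P ∈ S, α ∈ TC P) := by
    intro α
    simp only [hT, hT0, hTA, hTB, hTC, Finset.mem_filter, Finset.mem_univ, true_and]
    constructor
    · rintro ⟨h1, h2, h3⟩
      refine ⟨⟨isFree_mono hℓ h1, isFree_mono hℓ h2, isPolyFree_mono hgdvd h3⟩,
        fun p hp => ⟨isFree_mono (hpl p hp) h1, isFree_mono hℓ h2, isPolyFree_mono hgdvd h3⟩,
        fun p hp => ⟨isFree_mono hℓ h1, isFree_mono (hpl p hp) h2, isPolyFree_mono hgdvd h3⟩,
        fun P hP => ⟨isFree_mono hℓ h1, isFree_mono hℓ h2, isPolyFree_mono (hPg P hP) h3⟩⟩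
    · rintro ⟨⟨hf1, hf2, hf3⟩, hA, hB, hC⟩
      refine ⟨isFree_of_primes hf1.1 fun p hp hpd => ?_,
        isFree_of_primes hf2.1 fun p hp hpd => ?_,
        isPolyFree_of_irreds fun P hPm hPirr hPd hex => ?_⟩
      · by_cases hpℓ : p ∣ ℓ
        · exact hf1.2 p hpℓ hp.ne_one
        · exact ((hA p ((hR p).mpr ⟨hp, hpd, hpℓ⟩)).1).2 p (dvd_mul_right p ℓ) hp.ne_one
      · by_cases hpℓ : p ∣ ℓ
        · exact hf2.2 p hpℓ hp.ne_one
        · exact ((hB p ((hR p).mpr ⟨hp, hpd, hpℓ⟩)).2.1).2 p (dvd_mul_right p ℓ) hp.ne_one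
      · by_cases hPgd : P ∣ g
        · exact hPirr.not_isUnit ((hf3 P hPm hPgd hex) ▸ isUnit_one)
        · exact hPirr.not_isUnit
            (((hC P ((hS P).mpr ⟨hPm, hPirr, hPd, hPgd⟩)).2.2 P hPm (dvd_mul_right P g) hex) ▸
              isUnit_one)
  have hTsub : T ⊆ T0 := fun α hα => ((hTiff α).mp hα).1
  -- the counting inequality in ℕ
  have hkey : T0.card ≤ T.card + ((∑ p ∈ R, (T0 \ TA p).card) + (∑ p ∈ R, (T0 \ TB p).card)
      + (∑ P ∈ S, (T0 \ TC P).card)) := by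
    have hsub : T0 \ T ⊆ (R.biUnion fun p => T0 \ TA p) ∪ (R.biUnion fun p => T0 \ TB p)
        ∪ (S.biUnion fun P => T0 \ TC P) := by
      intro α hα
      obtain ⟨hα0, hαT⟩ := Finset.mem_sdiff.mp hα
      by_contra hnotin
      refine hαT ((hTiff α).mpr ⟨hα0, fun p hp => ?_, fun p hp => ?_, fun P hP => ?_⟩)
      · by_contra hx
        exact hnotin (Finset.mem_union_left _ (Finset.mem_union_left _
          (Finset.mem_biUnion.mpr ⟨p, hp, Finset.mem_sdiff.mpr ⟨hα0, hx⟩⟩)))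
      · by_contra hx
        exact hnotin (Finset.mem_union_left _ (Finset.mem_union_right _
          (Finset.mem_biUnion.mpr ⟨p, hp, Finset.mem_sdiff.mpr ⟨hα0, hx⟩⟩)))
      · by_contra hx
        exact hnotin (Finset.mem_union_right _
          (Finset.mem_biUnion.mpr ⟨P, hP, Finset.mem_sdiff.mpr ⟨hα0, hx⟩⟩))
    have h1 : (T0 \ T).card ≤ (∑ p ∈ R, (T0 \ TA p).card) + (∑ p ∈ R, (T0 \ TB p).card)
        + (∑ P ∈ S, (T0 \ TC P).card) := by
      have c0 : (T0 \ T).card ≤ ((R.biUnion fun p => T0 \ TA p) ∪ (R.biUnion fun p => T0 \ TB p)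
          ∪ (S.biUnion fun P => T0 \ TC P)).card := Finset.card_le_card hsub
      have c1 := Finset.card_union_le ((R.biUnion fun p => T0 \ TA p) ∪ (R.biUnion fun p => T0 \ TB p))
        (S.biUnion fun P => T0 \ TC P)
      have c2 := Finset.card_union_le (R.biUnion fun p => T0 \ TA p) (R.biUnion fun p => T0 \ TB p)
      have c3 := Finset.card_biUnion_le (s := R) (t := fun p => T0 \ TA p)
      have c4 := Finset.card_biUnion_le (s := R) (t := fun p => T0 \ TB p)
      have c5 := Finset.card_biUnion_le (s := S) (t := fun P => T0 \ TC P)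
      omega
    have h2 : (T0 \ T).card = T0.card - T.card := Finset.card_sdiff_of_subset hTsub
    have h3 : T.card ≤ T0.card := Finset.card_le_card hTsub
    omega
  -- rewrite NElems as finset cards
  have eT : NElems K f (q ^ n - 1) (q ^ n - 1) ((X : Polynomial K) ^ n - 1) = T.card := by
    rw [NElems_eq_card]
  have eT0 : NElems K f ℓ ℓ g = T0.card := by rw [NElems_eq_card]
  have eA : ∀ p, NElems K f (p * ℓ) ℓ g = (TA p).card := by
    intro p; rw [NElems_eq_card]
  have eB : ∀ p, NElems K f ℓ (p * ℓ) g = (TB p).card := by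
    intro p; rw [NElems_eq_card]
  have eC : ∀ P, NElems K f ℓ ℓ (P * g) = (TC P).card := by
    intro P; rw [NElems_eq_card]
  simp only [eT, eT0, eA, eB, eC]
  -- express card of pieces
  have cA : ∀ p, ((TA p).card : ℝ) = (T0.card : ℝ) - ((T0 \ TA p).card : ℝ) := by
    intro p
    rw [Finset.card_sdiff_of_subset (hA0 p), Nat.cast_sub (Finset.card_le_card (hA0 p))]
    ring
  have cB : ∀ p, ((TB p).card : ℝ) = (T0.card : ℝ) - ((T0 \ TB p).card : ℝ) := by
    intro p
    rw [Finset.card_sdiff_of_subset (hB0 p), Nat.cast_sub (Finset.card_le_card (hB0 p))]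
    ring
  have cC : ∀ P, ((TC P).card : ℝ) = (T0.card : ℝ) - ((T0 \ TC P).card : ℝ) := by
    intro P
    rw [Finset.card_sdiff_of_subset (hC0 P), Nat.cast_sub (Finset.card_le_card (hC0 P))]
    ring
  have sA : ∑ p ∈ R, ((TA p).card : ℝ)
      = (R.card : ℝ) * (T0.card : ℝ) - ∑ p ∈ R, ((T0 \ TA p).card : ℝ) := by
    rw [Finset.sum_congr rfl fun p _ => cA p, Finset.sum_sub_distrib, Finset.sum_const,
      nsmul_eq_mul]
  have sB : ∑ p ∈ R, ((TB p).card : ℝ)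
      = (R.card : ℝ) * (T0.card : ℝ) - ∑ p ∈ R, ((T0 \ TB p).card : ℝ) := by
    rw [Finset.sum_congr rfl fun p _ => cB p, Finset.sum_sub_distrib, Finset.sum_const,
      nsmul_eq_mul]
  have sC : ∑ P ∈ S, ((TC P).card : ℝ)
      = (S.card : ℝ) * (T0.card : ℝ) - ∑ P ∈ S, ((T0 \ TC P).card : ℝ) := by
    rw [Finset.sum_congr rfl fun P _ => cC P, Finset.sum_sub_distrib, Finset.sum_const,
      nsmul_eq_mul]
  rw [sA, sB, sC]
  have hkeyR : (T0.card : ℝ) ≤ (T.card : ℝ) + ((∑ p ∈ R, ((T0 \ TA p).card : ℝ))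
      + (∑ p ∈ R, ((T0 \ TB p).card : ℝ)) + (∑ P ∈ S, ((T0 \ TC P).card : ℝ))) := by
    exact_mod_cast hkey
  linarith
end

section
/- Let q be a prime power, n ≥ 3 and m₁, m₂ positive integers. If 𝔑(q,n) ≤ m₁ + m₂ + 1, then (q,n) ∉ B(m₁,m₂). -/
open Polynomial

section Aux

variable {F : Type} [Field F] [Fintype F]

lemma notPrim_zero (h3 : 3 ≤ Fintype.card F) : ¬ IsPrimitiveElem (0 : F) := by
  intro hp
  have h1 : (0 : F) ^ orderOf (0 : F) = 1 := pow_orderOf_eq_one 0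
  rw [hp, zero_pow (by omega)] at h1
  exact zero_ne_one h1

lemma notPrim_one (h3 : 3 ≤ Fintype.card F) : ¬ IsPrimitiveElem (1 : F) := by
  intro hp
  rw [IsPrimitiveElem, orderOf_one] at hp
  omega

lemma prim_ne_zero (h3 : 3 ≤ Fintype.card F) {α : F} (hp : IsPrimitiveElem α) : α ≠ 0 := by
  rintro rfl; exact notPrim_zero h3 hp

lemma ratEval_div (p q : F[X]) (hq : q ≠ 0) (hco : IsCoprime p q) (α : F) :
    ratEval (algebraMap F[X] (RatFunc F) p / algebraMap F[X] (RatFunc F) q) α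
      = p.eval α / q.eval α := by
  classical
  have hgcd : GCDMonoid.gcd p q = 1 := by
    have hu : IsUnit (GCDMonoid.gcd p q) := gcd_isUnit_iff_isRelPrime.mpr hco.isRelPrime
    rw [← normalize_gcd, normalize_eq_one]
    exact hu
  have hlc : q.leadingCoeff ≠ 0 := leadingCoeff_ne_zero.mpr hq
  rw [ratEval, RatFunc.eval, RatFunc.num_div, RatFunc.denom_div p hq, hgcd]
  simp only [EuclideanDomain.div_one, eval₂_eq_eval_map, Polynomial.map_id]
  rw [Polynomial.eval_mul, Polynomial.eval_mul, Polynomial.eval_C]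
  exact mul_div_mul_left _ _ (inv_ne_zero hlc)

/-- The key construction: given disjoint small root sets `A` (for the numerator)
and `B` (for the denominator), with a distinguished nonzero `a₀ ∈ A` and a point
`α₀` outside `A ∪ B`, there is `f ∈ Υ` with `f(α₀) = 1` and `f ≡ 0` on `A ∪ B`. -/
lemma main_construction (m₁ m₂ : ℕ) (A B : Finset F)
    (hAB : Disjoint A B) (hA : A.card ≤ m₁) (hBc : B.card ≤ m₂)
    {a₀ : F} (ha₀A : a₀ ∈ A) (ha₀0 : a₀ ≠ 0)
    {α₀ : F} (hα₀A : α₀ ∉ A) (hα₀B : α₀ ∉ B) :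
    ∃ f ∈ Upsilon F m₁ m₂, ratEval f α₀ = 1 ∧
      (∀ α ∈ A, ratEval f α = 0) ∧ (∀ α ∈ B, ratEval f α = 0) := by
  classical
  set p : F[X] := ∏ a ∈ A, (X - C a) with hp_def
  set r : F[X] := ∏ b ∈ B, (X - C b) with hr_def
  have hpm : p.Monic := monic_prod_of_monic _ _ (fun a _ => monic_X_sub_C a)
  have hrm : r.Monic := monic_prod_of_monic _ _ (fun b _ => monic_X_sub_C b)
  have hpe : ∀ x : F, p.eval x = ∏ a ∈ A, (x - a) := by
    intro x; simp [hp_def, eval_prod]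
  have hre : ∀ x : F, r.eval x = ∏ b ∈ B, (x - b) := by
    intro x; simp [hr_def, eval_prod]
  have hp0 : p.eval α₀ ≠ 0 := by
    rw [hpe]
    exact Finset.prod_ne_zero_iff.mpr fun a ha => sub_ne_zero.mpr (fun e => hα₀A (e ▸ ha))
  have hr0 : r.eval α₀ ≠ 0 := by
    rw [hre]
    exact Finset.prod_ne_zero_iff.mpr fun b hb => sub_ne_zero.mpr (fun e => hα₀B (e ▸ hb))
  set c : F := r.eval α₀ / p.eval α₀ with hc_def
  have hc : c ≠ 0 := div_ne_zero hr0 hp0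
  set f₁ : F[X] := C c * p with hf₁_def
  have hf₂0 : r ≠ 0 := hrm.ne_zero
  -- coprimality
  have hcoPR : IsCoprime p r := by
    refine IsCoprime.prod_left fun a ha => IsCoprime.prod_right fun b hb => ?_
    refine isCoprime_X_sub_C_of_isUnit_sub ?_
    have : a ≠ b := fun e => (Finset.disjoint_left.mp hAB ha) (e ▸ hb)
    exact (sub_ne_zero.mpr this).isUnit
  have hcoC : IsCoprime (C c) r := ⟨C c⁻¹, 0, by
    rw [zero_mul, add_zero, ← C_mul, inv_mul_cancel₀ hc, C_1]⟩
  have hco : IsCoprime f₁ r := hcoC.mul_left hcoPR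
  -- degrees
  have hpdeg : p.natDegree = A.card := by
    rw [hp_def, natDegree_prod_of_monic _ _ (fun a _ => monic_X_sub_C a)]
    simp
  have hrdeg : r.natDegree = B.card := by
    rw [hr_def, natDegree_prod_of_monic _ _ (fun b _ => monic_X_sub_C b)]
    simp
  have hf₁deg : f₁.natDegree ≤ m₁ := by
    rw [hf₁_def, natDegree_C_mul hc, hpdeg]; exact hA
  have hf₂deg : r.natDegree ≤ m₂ := by rw [hrdeg]; exact hBc
  -- the rational function
  set f : RatFunc F := algebraMap F[X] (RatFunc F) f₁ / algebraMap F[X] (RatFunc F) r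
    with hf_def
  have heval : ∀ α : F, ratEval f α = f₁.eval α / r.eval α :=
    fun α => ratEval_div f₁ r hf₂0 hco α
  -- the squarefree divisor condition
  have ha₀AB : a₀ ∈ A ∪ B := Finset.mem_union_left _ ha₀A
  have hprod : f₁ * r = C c * ((X - C a₀) * ∏ x ∈ (A ∪ B).erase a₀, (X - C x)) := by
    rw [hf₁_def, mul_assoc, hp_def, hr_def, ← Finset.prod_union hAB,
      ← Finset.mul_prod_erase _ _ ha₀AB]
  refine ⟨f, ⟨f₁, r, hf₂0, hf_def, hf₁deg, hf₂deg, hco, 1, X - C a₀, one_pos,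
    monic_X_sub_C a₀, irreducible_X_sub_C a₀, ?_, Nat.gcd_one_left _, ?_, ?_⟩, ?_, ?_, ?_⟩
  · exact fun hXa => ha₀0 (C_eq_zero.mp (sub_eq_self.mp hXa))
  · rw [pow_one, hprod]
    exact Dvd.dvd.mul_left (Dvd.dvd.mul_right dvd_rfl _) _
  · intro hdvd
    rw [hprod] at hdvd
    have h2 : (X - C a₀) ^ (1 + 1) ∣ (X - C a₀) * ∏ x ∈ (A ∪ B).erase a₀, (X - C x) := by
      have := hdvd.mul_left (C c⁻¹)
      rwa [← mul_assoc, ← C_mul, inv_mul_cancel₀ hc, C_1, one_mul] at this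
    rw [pow_succ, pow_one, mul_dvd_mul_iff_left (X_sub_C_ne_zero a₀)] at h2
    have hz : Polynomial.eval a₀ (∏ x ∈ (A ∪ B).erase a₀, (X - C x)) = 0 :=
      eval_eq_zero_of_dvd_of_eval_eq_zero h2 (by simp)
    rw [eval_prod] at hz
    simp only [eval_sub, eval_X, eval_C] at hz
    obtain ⟨x, hx, hx0⟩ := Finset.prod_eq_zero_iff.mp hz
    exact (Finset.ne_of_mem_erase hx) (sub_eq_zero.mp hx0).symm
  · rw [heval, hf₁_def, Polynomial.eval_mul, Polynomial.eval_C, hc_def,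
      div_mul_cancel₀ _ hp0, div_self hr0]
  · intro α hα
    rw [heval, hf₁_def, Polynomial.eval_mul, hpe,
      Finset.prod_eq_zero hα (by rw [sub_self]), mul_zero, zero_div]
  · intro α hα
    rw [heval, hre, Finset.prod_eq_zero hα (by rw [sub_self]), div_zero]

end Aux

theorem stmt16 (q n m₁ m₂ : ℕ) (hq : IsPrimePow q) (hn : 3 ≤ n)
    (hm₁ : 0 < m₁) (hm₂ : 0 < m₂)
    (K L : Type) [Field K] [Field L] [Fintype K] [Fintype L] [Algebra K L]
    (hK : Fintype.card K = q) (hL : Fintype.card L = q ^ n)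
    (h : NNum K L n ≤ m₁ + m₂ + 1) : ¬ memB m₁ m₂ q n := by
  classical
  intro hB
  have hq2 : 2 ≤ q := hq.two_le
  have hcard : 8 ≤ Fintype.card L := by
    rw [hL]
    calc (8 : ℕ) = 2 ^ 3 := by norm_num
    _ ≤ q ^ 3 := Nat.pow_le_pow_left hq2 3
    _ ≤ q ^ n := Nat.pow_le_pow_right (by omega) hn
  have h3 : 3 ≤ Fintype.card L := by omega
  set S : Finset L := {α : L | IsPrimitiveElem α ∧ IsNormalElem K n α}.toFinset with hS_def
  have hmemS : ∀ α : L, α ∈ S ↔ IsPrimitiveElem α ∧ IsNormalElem K n α := by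
    intro α; rw [hS_def, Set.mem_toFinset]; rfl
  have hScard : S.card ≤ m₁ + m₂ + 1 := by
    have : NNum K L n = S.card := by
      rw [NNum, Nat.card_eq_card_toFinset]
    omega
  -- helper to derive a contradiction from a suitable f
  have key : ∀ f ∈ Upsilon L m₁ m₂,
      (∀ α ∈ S, ratEval f α = 0 ∨ ratEval f α = 1) → False := by
    intro f hf hval
    obtain ⟨α, hα₁, hα₂, hα₃⟩ := hB K L hK hL f hf
    have hαS : α ∈ S := (hmemS α).mpr ⟨hα₁, hα₂⟩
    rcases hval α hαS with h0 | h1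
    · exact notPrim_zero h3 (h0 ▸ hα₃)
    · exact notPrim_one h3 (h1 ▸ hα₃)
  rcases S.eq_empty_or_nonempty with hSe | ⟨α₀, hα₀S⟩
  · -- S empty: any f ∈ Υ gives a contradiction
    obtain ⟨b, hb⟩ := exists_ne (0 : L)
    obtain ⟨f, hf, -, -, -⟩ := main_construction (F := L) m₁ m₂ {b} ∅
      (Finset.disjoint_empty_right _) (by simpa using Nat.succ_le_of_lt hm₁) (by simp)
      (Finset.mem_singleton_self b) hb
      (by simp [Ne.symm hb]) (Finset.notMem_empty 0)
    exact key f hf (by simp [hSe])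
  · set T : Finset L := S.erase α₀ with hT_def
    have hTcard : T.card ≤ m₁ + m₂ := by
      rw [hT_def, Finset.card_erase_of_mem hα₀S]
      omega
    have hα₀T : α₀ ∉ T := Finset.notMem_erase _ _
    rcases T.eq_empty_or_nonempty with hTe | hTne
    · -- S = {α₀}
      have hSsub : ∀ α ∈ S, α = α₀ := by
        intro α hα
        by_contra hne
        have hmem : α ∈ T := Finset.mem_erase.mpr ⟨hne, hα⟩
        rw [hTe] at hmem
        exact absurd hmem (Finset.notMem_empty α)
      obtain ⟨b, hb0, hbα⟩ : ∃ b : L, b ≠ 0 ∧ b ≠ α₀ := by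
        by_contra hcon
        push_neg at hcon
        have hsub : (Finset.univ : Finset L) ⊆ {0, α₀} := by
          intro x _
          rcases eq_or_ne x 0 with rfl | hx0
          · simp
          · simp [hcon x hx0]
        have := Finset.card_le_card hsub
        have h2' : ({0, α₀} : Finset L).card ≤ 2 := Finset.card_insert_le _ _ |>.trans (by simp)
        rw [Finset.card_univ] at this
        omega
      obtain ⟨f, hf, h1, hA0, -⟩ := main_construction (F := L) m₁ m₂ {b} ∅
        (Finset.disjoint_empty_right _) (by simpa using Nat.succ_le_of_lt hm₁) (by simp)
        (Finset.mem_singleton_self b) hb0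
        (by simp [Ne.symm hbα]) (Finset.notMem_empty α₀)
      refine key f hf ?_
      intro α hα
      rw [hSsub α hα]
      exact Or.inr h1
    · -- generic case
      obtain ⟨A, hAsub, hAcard⟩ := Finset.exists_subset_card_eq (s := T) (n := min T.card m₁)
        (min_le_left _ _)
      set B : Finset L := T \ A with hB_def
      have hBcard : B.card = T.card - A.card := Finset.card_sdiff_of_subset hAsub
      have hAm : A.card ≤ m₁ := by rw [hAcard]; exact min_le_right _ _
      have hBm : B.card ≤ m₂ := by
        rw [hBcard, hAcard]
        omega
      have hAne : A.Nonempty := by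
        rw [← Finset.card_pos, hAcard]
        have := Finset.card_pos.mpr hTne
        omega
      obtain ⟨a₀, ha₀A⟩ := hAne
      have ha₀S : a₀ ∈ S := Finset.mem_of_mem_erase (hAsub ha₀A)
      have ha₀0 : a₀ ≠ 0 := prim_ne_zero h3 ((hmemS a₀).mp ha₀S).1
      have hABdisj : Disjoint A B := Finset.disjoint_sdiff
      have hα₀A : α₀ ∉ A := fun h => hα₀T (hAsub h)
      have hα₀B : α₀ ∉ B := fun h => hα₀T (Finset.mem_sdiff.mp h).1
      obtain ⟨f, hf, h1, hA0, hB0⟩ := main_construction (F := L) m₁ m₂ A B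
        hABdisj hAm hBm ha₀A ha₀0 hα₀A hα₀B
      refine key f hf ?_
      intro α hα
      rcases eq_or_ne α α₀ with rfl | hne
      · exact Or.inr h1
      · have hαT : α ∈ T := Finset.mem_erase.mpr ⟨hne, hα⟩
        rcases Finset.mem_union.mp ((Finset.union_sdiff_of_subset hAsub).symm ▸ hαT) with hc | hc
        · exact Or.inl (hA0 α hc)
        · exact Or.inl (hB0 α hc)
end

section
/- Let q = 2^k for some positive integer k, let n ≥ 3, let m₁, m₂ be positive integers and set m = max{m₁, m₂}. If 𝔑(q,n)/m + φ(qⁿ−1) > qⁿ + 1, then (q,n) ∈ B(m₁,m₂). -/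
open Polynomial

lemma orderOf_zero_field {L : Type} [Field L] [Fintype L] :
    orderOf (0 : L) ≠ Fintype.card L - 1 := by
  have h2 : 2 ≤ Fintype.card L := Fintype.one_lt_card
  intro ha
  have h1 := pow_orderOf_eq_one (0 : L)
  rw [ha, zero_pow (by omega : Fintype.card L - 1 ≠ 0)] at h1
  exact zero_ne_one h1

open Finset in
lemma card_prim (L : Type) [Field L] [Fintype L] [DecidableEq L]
    [DecidablePred fun a : L => IsPrimitiveElem a] :
    (Finset.univ.filter fun a : L => IsPrimitiveElem a).card
      = Nat.totient (Fintype.card L - 1) := by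
  classical
  have hd : Fintype.card L - 1 ∣ Fintype.card Lˣ := by rw [Fintype.card_units]
  rw [← IsCyclic.card_orderOf_eq_totient (α := Lˣ) hd]
  apply Finset.card_bij' (fun (a : L) _ => if h : a = 0 then 1 else Units.mk0 a h)
    (fun (u : Lˣ) _ => (u : L))
  · intro a ha
    simp only [mem_filter, mem_univ, true_and] at ha ⊢
    rw [IsPrimitiveElem] at ha
    have ha0 : a ≠ 0 := fun h => orderOf_zero_field (h ▸ ha)
    rw [dif_neg ha0, ← orderOf_units, Units.val_mk0]
    exact ha
  · intro u hu
    simp only [mem_filter, mem_univ, true_and] at hu ⊢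
    rw [IsPrimitiveElem]
    rw [orderOf_units]; exact hu
  · intro a ha
    simp only [mem_filter, mem_univ, true_and] at ha
    rw [IsPrimitiveElem] at ha
    have ha0 : a ≠ 0 := fun h => orderOf_zero_field (h ▸ ha)
    simp [ha0]
  · intro u hu
    simp [Units.ne_zero u]
open Finset in
lemma exists_tau {K L K' L' : Type} [Field K] [Field L] [Field K'] [Field L']
    [Fintype K] [Fintype K'] [Fintype L'] [Algebra K L] [Algebra K' L']
    (hK : Fintype.card K = Fintype.card K') (σ : L ≃+* L') :
    ∃ τ : K ≃+* K', ∀ a : K, σ (algebraMap K L a) = algebraMap K' L' (τ a) := by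
  classical
  set q := Fintype.card K' with hq_def
  have hq2 : 2 ≤ q := Fintype.one_lt_card
  set A := algebraMap K' L' with hA_def
  have hAinj : Function.Injective A := A.injective
  set ψ : K →+* L' := σ.toRingHom.comp (algebraMap K L) with hψ_def
  have hψinj : Function.Injective ψ := σ.injective.comp (algebraMap K L).injective
  set R : Finset L' := univ.filter (fun x => x ^ q = x) with hR_def
  set I : Finset L' := univ.image A with hI_def
  have hIR : I ⊆ R := by
    intro x hx
    simp only [hI_def, Finset.mem_image, Finset.mem_univ, true_and] at hx
    obtain ⟨b, rfl⟩ := hx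
    simp only [hR_def, Finset.mem_filter, Finset.mem_univ, true_and]
    rw [← map_pow, FiniteField.pow_card]
  have hIcard : I.card = q := by
    rw [hI_def, Finset.card_image_of_injective _ hAinj, Finset.card_univ]
  have hp0 : (Polynomial.X ^ q - Polynomial.X : L'[X]) ≠ 0 :=
    FiniteField.X_pow_card_sub_X_ne_zero L' (p := q) hq2
  have hRcard : R.card ≤ q := by
    have hsub : R ⊆ (Polynomial.X ^ q - Polynomial.X : L'[X]).roots.toFinset := by
      intro x hx
      simp only [hR_def, Finset.mem_filter, Finset.mem_univ, true_and] at hx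
      simp only [Multiset.mem_toFinset]
      refine (Polynomial.mem_roots hp0).mpr ?_
      simp [Polynomial.IsRoot, hx]
    calc R.card ≤ _ := Finset.card_le_card hsub
      _ ≤ Multiset.card (Polynomial.X ^ q - Polynomial.X : L'[X]).roots :=
        Multiset.toFinset_card_le _
      _ ≤ (Polynomial.X ^ q - Polynomial.X : L'[X]).natDegree := Polynomial.card_roots' _
      _ ≤ q := by
        rw [FiniteField.X_pow_card_sub_X_natDegree_eq L' (p := q) hq2]
  have hRI : R = I := (Finset.eq_of_subset_of_card_le hIR (hRcard.trans hIcard.ge)).symm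
  have hmem : ∀ a : K, ∃ b : K', A b = ψ a := by
    intro a
    have : ψ a ∈ R := by
      simp only [hR_def, Finset.mem_filter, Finset.mem_univ, true_and]
      have ha : a ^ q = a := by rw [← hK]; exact FiniteField.pow_card a
      rw [← map_pow, ha]
    rw [hRI, hI_def] at this
    obtain ⟨b, _, hb⟩ := Finset.mem_image.mp this
    exact ⟨b, hb⟩
  choose t ht using hmem
  let τ₀ : K →+* K' :=
    { toFun := t
      map_one' := hAinj (by simp only [ht, map_one])
      map_mul' := fun a b => hAinj (by simp only [ht, map_mul])
      map_zero' := hAinj (by simp only [ht, map_zero])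
      map_add' := fun a b => hAinj (by simp only [ht, map_add]) }
  have hτ₀ : ∀ a, τ₀ a = t a := fun _ => rfl
  have hinj : Function.Injective τ₀ := fun a b hab => hψinj (by
    rw [← ht, ← ht]; exact congrArg (⇑A) hab)
  have hbij : Function.Bijective τ₀ :=
    (Fintype.bijective_iff_injective_and_card τ₀).mpr ⟨hinj, hK⟩
  refine ⟨RingEquiv.ofBijective τ₀ hbij, fun a => ?_⟩
  show σ (algebraMap K L a) = A (τ₀ a)
  rw [hτ₀, ht]
  rfl
lemma isPrim_map {L L' : Type} [Field L] [Field L'] [Fintype L] [Fintype L'] (σ : L ≃+* L')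
    (hL : Fintype.card L = Fintype.card L') {α : L} (h : IsPrimitiveElem α) :
    IsPrimitiveElem (σ α) := by
  rw [IsPrimitiveElem] at h ⊢
  rw [← hL, ← h]
  exact orderOf_injective σ.toMulEquiv.toMonoidHom σ.injective α

lemma isNormal_map {K L K' L' : Type} [Field K] [Field L] [Field K'] [Field L']
    [Fintype K] [Fintype K'] [Algebra K L] [Algebra K' L'] (σ : L ≃+* L') (τ : K ≃+* K')
    (hcomp : ∀ a : K, σ (algebraMap K L a) = algebraMap K' L' (τ a))
    (hq : Fintype.card K = Fintype.card K') {n : ℕ} {α : L} (h : IsNormalElem K n α) :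
    IsNormalElem K' n (σ α) := by
  obtain ⟨h1, h2⟩ := h
  have hterm : ∀ (x : K) (i : Fin n),
      σ (x • α ^ Fintype.card K ^ (i : ℕ)) = τ x • σ α ^ Fintype.card K' ^ (i : ℕ) := by
    intro x i
    rw [Algebra.smul_def, map_mul, hcomp, map_pow, hq, ← Algebra.smul_def]
  constructor
  · rw [Fintype.linearIndependent_iff] at h1 ⊢
    intro c' hc'
    have h0 : ∑ i : Fin n, τ.symm (c' i) • α ^ Fintype.card K ^ (i : ℕ) = 0 := by
      apply σ.injective
      rw [map_sum, map_zero]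
      calc ∑ i : Fin n, σ (τ.symm (c' i) • α ^ Fintype.card K ^ (i : ℕ))
          = ∑ i : Fin n, c' i • σ α ^ Fintype.card K' ^ (i : ℕ) := by
            refine Finset.sum_congr rfl fun i _ => ?_
            rw [hterm, τ.apply_symm_apply]
        _ = 0 := hc'
    intro i
    have hz := h1 _ h0 i
    have : c' i = τ (τ.symm (c' i)) := (τ.apply_symm_apply _).symm
    rw [this, hz, map_zero]
  · rw [Submodule.eq_top_iff']
    intro x
    have hx : σ.symm x ∈ Submodule.span K
        (Set.range fun i : Fin n => α ^ Fintype.card K ^ (i : ℕ)) :=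
      h2 ▸ Submodule.mem_top
    rw [Submodule.mem_span_range_iff_exists_fun] at hx
    obtain ⟨c, hc⟩ := hx
    rw [Submodule.mem_span_range_iff_exists_fun]
    refine ⟨fun i => τ (c i), ?_⟩
    have hs := congrArg σ hc
    rw [map_sum, RingEquiv.apply_symm_apply] at hs
    calc ∑ i : Fin n, τ (c i) • σ α ^ Fintype.card K' ^ (i : ℕ)
        = ∑ i : Fin n, σ (c i • α ^ Fintype.card K ^ (i : ℕ)) :=
          Finset.sum_congr rfl fun i _ => (hterm _ _).symm
      _ = x := hs

lemma nnum_congr {K L K' L' : Type} [Field K] [Field L] [Field K'] [Field L']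
    [Fintype K] [Fintype L] [Fintype K'] [Fintype L'] [Algebra K L] [Algebra K' L'] (n : ℕ)
    (hK : Fintype.card K = Fintype.card K') (hL : Fintype.card L = Fintype.card L') :
    NNum K L n = NNum K' L' n := by
  obtain ⟨τ, hcomp⟩ := exists_tau hK (FiniteField.ringEquivOfCardEq hL)
  set σ := FiniteField.ringEquivOfCardEq hL
  have hcomp' : ∀ b : K', σ.symm (algebraMap K' L' b) = algebraMap K L (τ.symm b) := by
    intro b
    apply σ.injective
    rw [RingEquiv.apply_symm_apply, hcomp, τ.apply_symm_apply]
  rw [NNum, NNum]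
  apply Nat.card_congr
  refine Equiv.subtypeEquiv σ.toEquiv fun a => ?_
  simp only [Set.mem_setOf_eq, RingEquiv.toEquiv_eq_coe, EquivLike.coe_coe]
  constructor
  · rintro ⟨hp, hn⟩
    exact ⟨isPrim_map σ hL hp, isNormal_map σ τ hcomp hK hn⟩
  · rintro ⟨hp, hn⟩
    have hp' := isPrim_map σ.symm hL.symm hp
    have hn' := isNormal_map σ.symm τ.symm hcomp' hK.symm hn
    rw [RingEquiv.symm_apply_apply] at hp' hn'
    exact ⟨hp', hn'⟩
open Finset in
lemma key_count (m₁ m₂ n : ℕ) (K L : Type) [Field K] [Field L] [Fintype K] [Fintype L]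
    [Algebra K L]
    (hcard : max m₁ m₂ * (Fintype.card L + 1)
      < NNum K L n + max m₁ m₂ * Nat.totient (Fintype.card L - 1)) :
    ∀ f ∈ Upsilon L m₁ m₂, ∃ α : L, IsPrimitiveElem α ∧ IsNormalElem K n α ∧
      IsPrimitiveElem (ratEval f α) := by
  classical
  intro f hf
  obtain ⟨f₁, f₂, hf₂, hfe, hd₁, hd₂, hcop, kk, g, hkk, hgm, hgi, hgx, hgcd, hdvd, hndvd⟩ := hf
  set m := max m₁ m₂ with hm_def
  have hff : f₁ * f₂ ≠ 0 := fun h0 => hndvd (h0 ▸ dvd_zero _)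
  have hf₁ : f₁ ≠ 0 := left_ne_zero_of_mul hff
  have hd0 : f.denom ≠ 0 := RatFunc.denom_ne_zero f
  -- cross identity
  have hcross : f.num * f₂ = f₁ * f.denom := by
    have h1 : algebraMap L[X] (RatFunc L) f.num / algebraMap L[X] (RatFunc L) f.denom
        = algebraMap L[X] (RatFunc L) f₁ / algebraMap L[X] (RatFunc L) f₂ :=
      (RatFunc.num_div_denom f).trans hfe
    rw [div_eq_div_iff (RatFunc.algebraMap_ne_zero hd0) (RatFunc.algebraMap_ne_zero hf₂)] at h1
    rw [← map_mul, ← map_mul] at h1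
    exact RatFunc.algebraMap_injective L h1
  have hnum : f.num ∣ f₁ :=
    (RatFunc.isCoprime_num_denom f).dvd_of_dvd_mul_right (hcross ▸ dvd_mul_right f.num f₂)
  have hden : f.denom ∣ f₂ :=
    (RatFunc.isCoprime_num_denom f).symm.dvd_of_dvd_mul_left
      (hcross ▸ dvd_mul_left f.denom f₁ : f.denom ∣ f.num * f₂)
  have hdnum : f.num.natDegree ≤ m :=
    le_trans (Polynomial.natDegree_le_of_dvd hnum hf₁) (le_trans hd₁ (le_max_left _ _))
  have hdden : f.denom.natDegree ≤ m :=
    le_trans (Polynomial.natDegree_le_of_dvd hden hf₂) (le_trans hd₂ (le_max_right _ _))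
  have hgprime : Prime g := (UniqueFactorizationMonoid.irreducible_iff_prime).mp hgi
  -- nonconstancy
  have hkey : ∀ β : L, f.num - Polynomial.C β * f.denom ≠ 0 := by
    intro β h0
    rw [sub_eq_zero] at h0
    have hf₁β : f₁ = Polynomial.C β * f₂ := by
      apply mul_right_cancel₀ hd0
      rw [← hcross, h0]; ring
    have hβ0 : β ≠ 0 := by
      rintro rfl
      simp only [map_zero, zero_mul] at hf₁β
      exact hf₁ hf₁β
    have hg1 : g ∣ f₁ * f₂ := (dvd_pow_self g hkk.ne').trans hdvd
    rw [hf₁β, mul_assoc] at hg1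
    have hg2 : g ∣ f₂ * f₂ :=
      ((Polynomial.isUnit_C.mpr hβ0.isUnit).dvd_mul_left).mp hg1
    have hgf₂ : g ∣ f₂ := (hgprime.2.2 _ _ hg2).elim id id
    have hgf₁ : g ∣ f₁ := hf₁β ▸ Dvd.dvd.mul_left hgf₂ _
    exact hgi.not_isUnit (hcop.isUnit_of_dvd' hgf₁ hgf₂)
  -- counting
  set c := Fintype.card L with hc_def
  set φn := Nat.totient (c - 1) with hφ_def
  set NP : Finset L := univ.filter (fun β => ¬ IsPrimitiveElem β) with hNP_def
  have hNP : NP.card = c - φn := by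
    rw [hNP_def, Finset.filter_not, Finset.card_sdiff_of_subset (Finset.filter_subset _ _),
      Finset.card_univ, card_prim L]
  set bad : Finset L := f.denom.roots.toFinset ∪
    NP.biUnion (fun β => (f.num - Polynomial.C β * f.denom).roots.toFinset) with hbad_def
  have hrootsle : ∀ p : L[X], p.natDegree ≤ m → p.roots.toFinset.card ≤ m := fun p hp =>
    le_trans (Multiset.toFinset_card_le _) (le_trans (Polynomial.card_roots' p) hp)
  have hbadcard : bad.card ≤ m * (1 + (c - φn)) := by
    calc bad.card ≤ f.denom.roots.toFinset.card
          + (NP.biUnion (fun β => (f.num - Polynomial.C β * f.denom).roots.toFinset)).card :=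
        Finset.card_union_le _ _
      _ ≤ m + ∑ β ∈ NP, (f.num - Polynomial.C β * f.denom).roots.toFinset.card := by
        gcongr
        · exact hrootsle _ hdden
        · exact Finset.card_biUnion_le
      _ ≤ m + NP.card * m := by
        gcongr
        exact Finset.sum_le_card_nsmul _ _ m (fun β _ => hrootsle _
          (le_trans (Polynomial.natDegree_sub_le _ _)
            (max_le hdnum (le_trans (Polynomial.natDegree_C_mul_le _ _) hdden))))
      _ = m * (1 + NP.card) := by ring
      _ = m * (1 + (c - φn)) := by rw [hNP]
  set S : Finset L := univ.filter (fun α => IsPrimitiveElem α ∧ IsNormalElem K n α) with hS_def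
  have hScard : S.card = NNum K L n := by
    rw [NNum]
    rw [Nat.card_eq_fintype_card]
    simp [hS_def, Fintype.card_subtype]
  have hφle : φn ≤ c := le_trans (Nat.totient_le _) (by omega)
  have hmul : m * (c - φn) + m * φn = m * c := by rw [← Nat.mul_add, Nat.sub_add_cancel hφle]
  have hlt : bad.card < S.card := by
    have h3 : m * (1 + (c - φn)) = m + m * (c - φn) := by ring
    have h4 : m * (c + 1) = m * c + m := by ring
    omega
  obtain ⟨α, hαS, hαbad⟩ : ∃ α ∈ S, α ∉ bad := by
    by_contra hcon
    push_neg at hcon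
    exact absurd (Finset.card_le_card hcon) (by omega)
  simp only [hS_def, mem_filter, mem_univ, true_and] at hαS
  refine ⟨α, hαS.1, hαS.2, ?_⟩
  have hdenα : Polynomial.eval α f.denom ≠ 0 := by
    intro h0
    exact hαbad (Finset.mem_union_left _ (by
      simp only [Multiset.mem_toFinset]
      exact (Polynomial.mem_roots hd0).mpr h0))
  have heval : ratEval f α = Polynomial.eval α f.num / Polynomial.eval α f.denom := rfl
  by_contra hnp
  set β := Polynomial.eval α f.num / Polynomial.eval α f.denom with hβ_def
  have hβNP : β ∈ NP := by
    simp only [hNP_def, mem_filter, mem_univ, true_and]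
    rw [heval] at hnp
    exact hnp
  have hroot : Polynomial.eval α (f.num - Polynomial.C β * f.denom) = 0 := by
    simp only [Polynomial.eval_sub, Polynomial.eval_mul, Polynomial.eval_C, hβ_def]
    field_simp
    ring
  exact hαbad (Finset.mem_union_right _ (Finset.mem_biUnion.mpr
    ⟨β, hβNP, by
      simp only [Multiset.mem_toFinset]
      exact (Polynomial.mem_roots (hkey β)).mpr hroot⟩))
theorem stmt17 (k q n m₁ m₂ : ℕ) (hk : 0 < k) (hqk : q = 2 ^ k) (hn : 3 ≤ n)
    (hm₁ : 0 < m₁) (hm₂ : 0 < m₂)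
    (K L : Type) [Field K] [Field L] [Fintype K] [Fintype L] [Algebra K L]
    (hK : Fintype.card K = q) (hL : Fintype.card L = q ^ n)
    (h : (NNum K L n : ℝ) / (max m₁ m₂ : ℝ) + (Nat.totient (q ^ n - 1) : ℝ)
      > (q : ℝ) ^ n + 1) :
    memB m₁ m₂ q n := by
  intro K' L' _ _ _ _ _ hK' hL' f hf
  have hNe : NNum K' L' n = NNum K L n :=
    nnum_congr n (by rw [hK, hK']) (by rw [hL, hL'])
  apply key_count m₁ m₂ n K' L' ?_ f hf
  rw [hL', hNe]
  have hm1 : (1 : ℝ) ≤ (max m₁ m₂ : ℝ) := by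
    exact_mod_cast le_trans hm₁ (le_max_left m₁ m₂)
  have hmR : (0 : ℝ) < (max m₁ m₂ : ℝ) := lt_of_lt_of_le zero_lt_one hm1
  have h2 : ((q : ℝ) ^ n + 1 - (Nat.totient (q ^ n - 1) : ℝ)) * (max m₁ m₂ : ℝ)
      < (NNum K L n : ℝ) := by
    rw [← lt_div_iff₀ hmR]
    linarith
  have h3 : ((max m₁ m₂ * (q ^ n + 1) : ℕ) : ℝ)
      < ((NNum K L n + max m₁ m₂ * Nat.totient (q ^ n - 1) : ℕ) : ℝ) := by
    push_cast
    nlinarith [h2]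
  exact_mod_cast h3
end
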